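/- Let β₁ = p₁/q₁ and β₂ = p₂/q₂ be rationals in lowest terms with p₁ not a multiple of q₂, and let T(x) = frac(β₁·frac(β₂·x)) on [0,1). Then the forward orbit of 1 under T (with T at 1 interpreted as the left limit) is an infinite set. -/

import Mathlib

/-- Left-continuous fractional part: `fractL y = y - ⌊y⌋` for `y ∉ ℤ`, and `fractL y = 1`
for `y ∈ ℤ`; it is the left limit of `Int.fract` at `y`. -/
noncomputable def fractL (y : ℝ) : ℝ := 1 - Int.fract (1 - y)

lemma fractL_eq_fract {y : ℝ} (hy : Int.fract y ≠ 0) : fractL y = Int.fract y := by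
  unfold fractL
  have h1 : (1 : ℝ) - y = ((1 : ℤ) : ℝ) + (-y) := by push_cast; ring
  rw [h1, Int.fract_intCast_add, Int.fract_neg hy]
  ring

lemma padicValRat_intCast_nonneg (p : ℕ) [hp : Fact p.Prime] (n : ℤ) :
    0 ≤ padicValRat p (n : ℚ) := by
  rw [padicValRat.of_int]
  exact Int.natCast_nonneg _

lemma val_fract {p : ℕ} [hp : Fact p.Prime] {q : ℚ} (h : padicValRat p q < 0) :
    Int.fract q ≠ 0 ∧ padicValRat p (Int.fract q) = padicValRat p q := by
  have hq : q ≠ 0 := by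
    rintro rfl
    simp [padicValRat] at h
  have hfr : Int.fract q ≠ 0 := by
    intro h0
    rw [Int.fract, sub_eq_zero] at h0
    rw [h0] at h
    exact absurd h (not_lt.2 (padicValRat_intCast_nonneg p _))
  refine ⟨hfr, ?_⟩
  rcases eq_or_ne ((⌊q⌋ : ℤ) : ℚ) 0 with h0 | h0
  · rw [Int.fract, h0, sub_zero]
  · have hrw : Int.fract q = q + (-((⌊q⌋ : ℤ) : ℚ)) := by rw [Int.fract, sub_eq_add_neg]
    rw [hrw]
    refine padicValRat.add_eq_of_lt (by rw [← hrw]; exact hfr) hq (neg_ne_zero.2 h0) ?_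
    rw [padicValRat.neg]
    exact lt_of_lt_of_le h (padicValRat_intCast_nonneg p _)

theorem stmt_15 (p₁ q₁ p₂ q₂ : ℤ)
    (hp₁ : 0 < p₁) (hq₁ : 0 < q₁) (hp₂ : 0 < p₂) (hq₂ : 0 < q₂)
    (hcop₁ : IsCoprime p₁ q₁) (hcop₂ : IsCoprime p₂ q₂)
    (hnd : ¬ q₂ ∣ p₁)
    (T : ℝ → ℝ)
    (hT : ∀ x, T x = Int.fract (((p₁ : ℝ) / q₁) * Int.fract (((p₂ : ℝ) / q₂) * x))) :
    Set.Infinite {y : ℝ | ∃ n : ℕ,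
      y = T^[n] (fractL (((p₁ : ℝ) / q₁) * fractL (((p₂ : ℝ) / q₂) * 1)))} := by
  classical
  -- get a prime ℓ with v_ℓ(p₁) < v_ℓ(q₂)
  obtain ⟨ℓ, hℓp, hℓ⟩ : ∃ ℓ : ℕ, ℓ.Prime ∧ padicValNat ℓ p₁.toNat < padicValNat ℓ q₂.toNat := by
    by_contra hcon
    push_neg at hcon
    apply hnd
    have h1 : q₂.toNat ∣ p₁.toNat := by
      rw [← Nat.factorization_le_iff_dvd (by omega) (by omega), Finsupp.le_def]
      intro a
      by_cases hap : a.Prime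
      · rw [Nat.factorization_def _ hap, Nat.factorization_def _ hap]
        exact hcon a hap
      · simp [Nat.factorization_eq_zero_of_not_prime _ hap]
    have := Int.natCast_dvd_natCast.mpr h1
    rwa [Int.toNat_of_nonneg hq₂.le, Int.toNat_of_nonneg hp₁.le] at this
  haveI : Fact ℓ.Prime := ⟨hℓp⟩
  set β₁ : ℚ := (p₁ : ℚ) / q₁ with hβ₁def
  set β₂ : ℚ := (p₂ : ℚ) / q₂ with hβ₂def
  have hβ₁ : β₁ ≠ 0 := by
    rw [hβ₁def]; positivity
  have hβ₂ : β₂ ≠ 0 := by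
    rw [hβ₂def]; positivity
  -- valuation computations
  have hq₂v : 1 ≤ padicValNat ℓ q₂.toNat := by omega
  have hℓq₂ : (ℓ : ℤ) ∣ q₂ := by
    have h1 : ℓ ∣ q₂.toNat := by
      by_contra h
      rw [padicValNat.eq_zero_of_not_dvd h] at hq₂v; omega
    have := Int.natCast_dvd_natCast.mpr h1
    rwa [Int.toNat_of_nonneg hq₂.le] at this
  have hℓp₂ : ¬ (ℓ : ℤ) ∣ p₂ := by
    intro h
    have hg : Int.gcd p₂ q₂ = 1 := Int.isCoprime_iff_gcd_eq_one.mp hcop₂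
    have : (ℓ : ℤ) ∣ (Int.gcd p₂ q₂ : ℤ) := Int.dvd_coe_gcd h hℓq₂
    rw [hg] at this
    have := Int.le_of_dvd one_pos this
    have := hℓp.two_le
    omega
  have habs1 : p₁.natAbs = p₁.toNat := by omega
  have habs2 : q₂.natAbs = q₂.toNat := by omega
  have hvp₁ : padicValRat ℓ ((p₁ : ℤ) : ℚ) = (padicValNat ℓ p₁.toNat : ℤ) := by
    rw [padicValRat.of_int, padicValInt, habs1]
  have hvq₂ : padicValRat ℓ ((q₂ : ℤ) : ℚ) = (padicValNat ℓ q₂.toNat : ℤ) := by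
    rw [padicValRat.of_int, padicValInt, habs2]
  have hvp₂ : padicValRat ℓ ((p₂ : ℤ) : ℚ) = 0 := by
    rw [padicValRat.of_int, padicValInt.eq_zero_of_not_dvd hℓp₂]; norm_num
  have hp₁0 : ((p₁ : ℤ) : ℚ) ≠ 0 := Int.cast_ne_zero.2 hp₁.ne'
  have hq₁0 : ((q₁ : ℤ) : ℚ) ≠ 0 := Int.cast_ne_zero.2 hq₁.ne'
  have hp₂0 : ((p₂ : ℤ) : ℚ) ≠ 0 := Int.cast_ne_zero.2 hp₂.ne'
  have hq₂0 : ((q₂ : ℤ) : ℚ) ≠ 0 := Int.cast_ne_zero.2 hq₂.ne'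
  have hvβ₁ : padicValRat ℓ β₁ = padicValRat ℓ ((p₁ : ℤ) : ℚ) - padicValRat ℓ ((q₁ : ℤ) : ℚ) :=
    padicValRat.div hp₁0 hq₁0
  have hvβ₂ : padicValRat ℓ β₂ = -(padicValNat ℓ q₂.toNat : ℤ) := by
    rw [hβ₂def, padicValRat.div hp₂0 hq₂0, hvp₂, hvq₂]; ring
  have hvβ₂neg : padicValRat ℓ β₂ < 0 := by rw [hvβ₂]; omega
  set c : ℤ := padicValRat ℓ β₁ + padicValRat ℓ β₂ with hcdef
  have hc : c < 0 := by
    have hq₁nn := padicValRat_intCast_nonneg ℓ q₁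
    rw [hcdef, hvβ₁, hvβ₂, hvp₁]
    omega
  -- the rational map
  set S : ℚ → ℚ := fun x => Int.fract (β₁ * Int.fract (β₂ * x)) with hSdef
  have hstep : ∀ x : ℚ, x ≠ 0 → padicValRat ℓ x ≤ 0 →
      S x ≠ 0 ∧ padicValRat ℓ (S x) = padicValRat ℓ x + c := by
    intro x hx hvx
    have hw : β₂ * x ≠ 0 := mul_ne_zero hβ₂ hx
    have hvw : padicValRat ℓ (β₂ * x) = padicValRat ℓ β₂ + padicValRat ℓ x :=
      padicValRat.mul hβ₂ hx
    have hvwneg : padicValRat ℓ (β₂ * x) < 0 := by rw [hvw]; omega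
    obtain ⟨hf1, hv1⟩ := val_fract hvwneg
    have hvu : padicValRat ℓ (β₁ * Int.fract (β₂ * x)) =
        padicValRat ℓ β₁ + padicValRat ℓ (β₂ * x) := by
      rw [padicValRat.mul hβ₁ hf1, hv1]
    have hvuneg : padicValRat ℓ (β₁ * Int.fract (β₂ * x)) < 0 := by
      rw [hvu, hvw]
      have : padicValRat ℓ β₁ + padicValRat ℓ β₂ < 0 := hc
      omega
    obtain ⟨hf2, hv2⟩ := val_fract hvuneg
    exact ⟨hf2, by rw [hSdef]; simp only; rw [hv2, hvu, hvw, hcdef]; ring⟩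
  -- iterate
  set y : ℕ → ℚ := fun n => S^[n] 1 with hydef
  have hyfact : ∀ n : ℕ, y n ≠ 0 ∧ padicValRat ℓ (y n) = n * c := by
    intro n
    induction n with
    | zero => simp [hydef, padicValRat.one]
    | succ n ih =>
      have hle : padicValRat ℓ (y n) ≤ 0 := by
        rw [ih.2]
        have : (0:ℤ) ≤ n := Int.natCast_nonneg n
        nlinarith
      have hy1 : y (n + 1) = S (y n) := by
        rw [hydef]; simp only [Function.iterate_succ_apply']
      obtain ⟨h1, h2⟩ := hstep (y n) ih.1 hle
      refine ⟨by rw [hy1]; exact h1, ?_⟩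
      rw [hy1, h2, ih.2]
      push_cast
      ring
  have hyinj : Function.Injective y := by
    intro m n hmn
    have := (hyfact m).2
    rw [hmn, (hyfact n).2] at this
    have h : (n : ℤ) = m := mul_right_cancel₀ hc.ne this
    omega
  -- relate T on ℝ with S on ℚ
  have hTq : ∀ q : ℚ, T ((q : ℚ) : ℝ) = ((S q : ℚ) : ℝ) := by
    intro q
    rw [hT, hSdef]
    have h1 : ((p₂ : ℝ) / q₂) * ((q : ℚ) : ℝ) = (((β₂ * q : ℚ)) : ℝ) := by
      rw [hβ₂def]; push_cast; ring
    rw [h1, ← Rat.cast_fract]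
    have h2 : ((p₁ : ℝ) / q₁) * ((Int.fract (β₂ * q) : ℚ) : ℝ)
        = (((β₁ * Int.fract (β₂ * q) : ℚ)) : ℝ) := by
      rw [hβ₁def]; push_cast; ring
    rw [h2, ← Rat.cast_fract]
  have hTiter : ∀ (n : ℕ) (q : ℚ), T^[n] ((q : ℚ) : ℝ) = ((S^[n] q : ℚ) : ℝ) := by
    intro n
    induction n with
    | zero => intro q; simp
    | succ n ih =>
      intro q
      rw [Function.iterate_succ_apply, Function.iterate_succ_apply, hTq, ih]
  -- identify the starting point with (y 1 : ℝ)
  have hstart : fractL (((p₁ : ℝ) / q₁) * fractL (((p₂ : ℝ) / q₂) * 1)) = ((y 1 : ℚ) : ℝ) := by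
    have h1 : ((p₂ : ℝ) / q₂) * 1 = ((β₂ : ℚ) : ℝ) := by rw [hβ₂def]; push_cast; ring
    obtain ⟨hfβ₂, hvfβ₂⟩ := val_fract hvβ₂neg
    have h2 : Int.fract ((β₂ : ℚ) : ℝ) ≠ 0 := by
      rw [← Rat.cast_fract]
      exact_mod_cast hfβ₂
    rw [h1, fractL_eq_fract h2, ← Rat.cast_fract]
    have h3 : ((p₁ : ℝ) / q₁) * ((Int.fract β₂ : ℚ) : ℝ)
        = (((β₁ * Int.fract β₂ : ℚ)) : ℝ) := by rw [hβ₁def]; push_cast; ring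
    rw [h3]
    have hvuneg : padicValRat ℓ (β₁ * Int.fract β₂) < 0 := by
      rw [padicValRat.mul hβ₁ hfβ₂, hvfβ₂]
      exact hc
    obtain ⟨hfu, _⟩ := val_fract hvuneg
    have h4 : Int.fract (((β₁ * Int.fract β₂ : ℚ)) : ℝ) ≠ 0 := by
      rw [← Rat.cast_fract]
      exact_mod_cast hfu
    rw [fractL_eq_fract h4, ← Rat.cast_fract]
    have : y 1 = S 1 := by rw [hydef]; simp
    rw [this, hSdef]
    norm_num
  -- conclude
  apply Set.infinite_of_injective_forall_mem (f := fun n : ℕ => ((y (n + 1) : ℚ) : ℝ))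
  · intro m n hmn
    simp only at hmn
    have : y (m + 1) = y (n + 1) := by exact_mod_cast hmn
    have := hyinj this
    omega
  · intro a
    refine ⟨a, ?_⟩
    rw [hstart, hTiter]
    have : y (a + 1) = S^[a] (y 1) := by
      rw [hydef]
      simp only [← Function.iterate_succ_apply]
      rfl
    rw [this]
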